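/- A marked Petri net (N, m) with N=(P,T,F) is integer unbounded if and only if the linear system ∃x ∈ ℚ≥0^T : Σ_{t∈T} x[t]·Δ(t) > 0 has a solution (where > means componentwise ≥ with at least one strict inequality). -/

import Mathlib

structure PetriNet (P T : Type) [Fintype P] [Fintype T] where
  pre : T → P → ℕ
  post : T → P → ℕ

variable {P T : Type} [Fintype P] [Fintype T] [DecidableEq P]

namespace PetriNet

def enabled (N : PetriNet P T) (t : T) (m : P → ℕ) : Prop := ∀ p, N.pre t p ≤ m p

def fires (N : PetriNet P T) (m m' : P → ℕ) : Prop :=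
  ∃ t, N.enabled t m ∧ ∀ p, m' p = m p + N.post t p - N.pre t p

def reach (N : PetriNet P T) : (P → ℕ) → (P → ℕ) → Prop := Relation.ReflTransGen N.fires

def zfires (N : PetriNet P T) (m m' : P → ℤ) : Prop :=
  ∃ t, ∀ p, m' p = m p + (N.post t p : ℤ) - (N.pre t p : ℤ)

def zreach (N : PetriNet P T) : (P → ℤ) → (P → ℤ) → Prop := Relation.ReflTransGen N.zfires

def cfires (N : PetriNet P T) (m m' : P → ℚ) : Prop :=
  ∃ t, ∃ l : ℚ, 0 < l ∧ l ≤ 1 ∧ (∀ p, l * (N.pre t p : ℚ) ≤ m p) ∧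
    ∀ p, m' p = m p + l * ((N.post t p : ℚ) - (N.pre t p : ℚ))

def creach (N : PetriNet P T) : (P → ℚ) → (P → ℚ) → Prop := Relation.ReflTransGen N.cfires

def bounded (N : PetriNet P T) (m : P → ℕ) : Prop :=
  ∃ b : ℕ, ∀ m', N.reach m m' → ∀ p, m' p ≤ b

def zbounded (N : PetriNet P T) (m : P → ℕ) : Prop :=
  ∃ b : ℕ, ∀ m' : P → ℤ, N.zreach (fun p => (m p : ℤ)) m' → (∀ p, 0 ≤ m' p) →
    ∀ p, m' p ≤ (b : ℤ)

def quasiLive (N : PetriNet P T) (m : P → ℕ) (t : T) : Prop :=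
  ∃ m', N.reach m m' ∧ N.enabled t m'

def live (N : PetriNet P T) (m : P → ℕ) (t : T) : Prop :=
  ∀ m', N.reach m m' → N.quasiLive m' t

def freeChoice (N : PetriNet P T) : Prop :=
  ∀ s t : T, (∀ p, N.pre s p = 0 ∨ N.pre t p = 0) ∨ N.pre s = N.pre t

def edge (N : PetriNet P T) : (P ⊕ T) → (P ⊕ T) → Prop
  | Sum.inl p, Sum.inr t => 0 < N.pre t p
  | Sum.inr t, Sum.inl p => 0 < N.post t p
  | _, _ => False

end PetriNet

/-- The marking with `k` tokens in place `p` and none elsewhere. -/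
def mk1 (p : P) (k : ℕ) : P → ℕ := fun q => if q = p then k else 0

/-- The continuous marking with `k` tokens in place `p` and none elsewhere. -/
def mkQ (p : P) (k : ℚ) : P → ℚ := fun q => if q = p then k else 0

/-- Any integrally reachable marking is `m0` plus a nonnegative integer combination of effects. -/
lemma zreach_exists_count (N : PetriNet P T) {m0 m' : P → ℤ} (h : N.zreach m0 m') :
    ∃ c : T → ℕ, ∀ p, m' p = m0 p + ∑ t, (c t : ℤ) * ((N.post t p : ℤ) - (N.pre t p : ℤ)) := by
  classical
  induction h with
  | refl => exact ⟨fun _ => 0, by simp⟩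
  | tail _ hstep ih =>
    obtain ⟨c, hc⟩ := ih
    obtain ⟨t, ht⟩ := hstep
    refine ⟨fun s => c s + if s = t then 1 else 0, fun p => ?_⟩
    rw [ht p, hc p]
    push_cast
    simp only [add_mul, Finset.sum_add_distrib, ite_mul, one_mul, zero_mul,
      Finset.sum_ite_eq', Finset.mem_univ, if_true]
    ring

/-- Conversely, any such combination is integrally reachable. -/
lemma zreach_count_aux (N : PetriNet P T) (m0 : P → ℤ) :
    ∀ n (c : T → ℕ), (∑ t, c t) = n →
      N.zreach m0 (fun p => m0 p + ∑ t, (c t : ℤ) * ((N.post t p : ℤ) - (N.pre t p : ℤ))) := by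
  classical
  intro n
  induction n with
  | zero =>
    intro c hc
    have h0 : ∀ t, c t = 0 := by
      intro t
      have := Finset.sum_eq_zero_iff.mp hc
      exact this t (Finset.mem_univ t)
    have : (fun p => m0 p + ∑ t, (c t : ℤ) * ((N.post t p : ℤ) - (N.pre t p : ℤ))) = m0 := by
      funext p; simp [h0]
    rw [this]
    exact Relation.ReflTransGen.refl
  | succ n ih =>
    intro c hc
    have hex : ∃ t, c t ≠ 0 := by
      by_contra h
      push_neg at h
      simp [h] at hc
    obtain ⟨t, ht⟩ := hex
    set c' : T → ℕ := fun s => if s = t then c t - 1 else c s with hc'def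
    have hct : c t = c' t + 1 := by simp [hc'def]; omega
    have herase : ∀ s ∈ Finset.univ.erase t, c' s = c s := by
      intro s hs
      simp only [Finset.mem_erase] at hs
      simp [hc'def, hs.1]
    have hsum : ∑ s, c' s = n := by
      have h1 : ∑ s, c s = (∑ s ∈ Finset.univ.erase t, c s) + c t :=
        (Finset.sum_erase_add _ _ (Finset.mem_univ t)).symm
      have h2 : ∑ s, c' s = (∑ s ∈ Finset.univ.erase t, c' s) + c' t :=
        (Finset.sum_erase_add _ _ (Finset.mem_univ t)).symm
      have h3 : ∑ s ∈ Finset.univ.erase t, c' s = ∑ s ∈ Finset.univ.erase t, c s :=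
        Finset.sum_congr rfl herase
      omega
    have key : ∀ p, m0 p + ∑ s, (c s : ℤ) * ((N.post s p : ℤ) - (N.pre s p : ℤ)) =
        (m0 p + ∑ s, (c' s : ℤ) * ((N.post s p : ℤ) - (N.pre s p : ℤ)))
          + (N.post t p : ℤ) - (N.pre t p : ℤ) := by
      intro p
      have h1 : ∑ s, (c s : ℤ) * ((N.post s p : ℤ) - (N.pre s p : ℤ)) =
          (∑ s ∈ Finset.univ.erase t, (c s : ℤ) * ((N.post s p : ℤ) - (N.pre s p : ℤ)))
            + (c t : ℤ) * ((N.post t p : ℤ) - (N.pre t p : ℤ)) :=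
        (Finset.sum_erase_add _ _ (Finset.mem_univ t)).symm
      have h2 : ∑ s, (c' s : ℤ) * ((N.post s p : ℤ) - (N.pre s p : ℤ)) =
          (∑ s ∈ Finset.univ.erase t, (c s : ℤ) * ((N.post s p : ℤ) - (N.pre s p : ℤ)))
            + (c' t : ℤ) * ((N.post t p : ℤ) - (N.pre t p : ℤ)) := by
        rw [← Finset.sum_erase_add _ _ (Finset.mem_univ t)]
        congr 1
        exact Finset.sum_congr rfl (fun s hs => by rw [herase s hs])
      rw [h1, h2, hct]
      push_cast
      ring
    have step : N.zfires
        (fun p => m0 p + ∑ s, (c' s : ℤ) * ((N.post s p : ℤ) - (N.pre s p : ℤ)))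
        (fun p => m0 p + ∑ s, (c s : ℤ) * ((N.post s p : ℤ) - (N.pre s p : ℤ))) :=
      ⟨t, fun p => key p⟩
    exact Relation.ReflTransGen.tail (ih c' hsum) step

lemma zreach_count (N : PetriNet P T) (m0 : P → ℤ) (c : T → ℕ) :
    N.zreach m0 (fun p => m0 p + ∑ t, (c t : ℤ) * ((N.post t p : ℤ) - (N.pre t p : ℤ))) :=
  zreach_count_aux N m0 (∑ t, c t) c rfl

theorem stmt2 (N : PetriNet P T) (m : P → ℕ) :
    ¬ N.zbounded m ↔
      ∃ x : T → ℚ, (∀ t, 0 ≤ x t) ∧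
        (∀ p, 0 ≤ ∑ t, x t * ((N.post t p : ℚ) - (N.pre t p : ℚ))) ∧
        (∃ p, 0 < ∑ t, x t * ((N.post t p : ℚ) - (N.pre t p : ℚ))) := by
  classical
  constructor
  · -- unbounded → solution
    intro hub
    -- There is a place ph with values unbounded among reachable nonneg markings.
    have hval : ∀ b : ℕ, ∃ c : T → ℕ,
        (∀ q, 0 ≤ (m q : ℤ) + ∑ t, (c t : ℤ) * ((N.post t q : ℤ) - (N.pre t q : ℤ))) ∧
        ∃ p, (b : ℤ) < (m p : ℤ) + ∑ t, (c t : ℤ) * ((N.post t p : ℤ) - (N.pre t p : ℤ)) := by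
      intro b
      unfold PetriNet.zbounded at hub
      push_neg at hub
      obtain ⟨m', hr, hnn, p, hp⟩ := hub b
      obtain ⟨c, hcm⟩ := zreach_exists_count N hr
      refine ⟨c, fun q => ?_, p, ?_⟩
      · rw [← hcm q]; exact hnn q
      · rw [← hcm p]; exact hp
    have hphat : ∃ ph : P, ∀ b : ℤ, ∃ c : T → ℕ,
        (∀ q, 0 ≤ (m q : ℤ) + ∑ t, (c t : ℤ) * ((N.post t q : ℤ) - (N.pre t q : ℤ))) ∧
        b < (m ph : ℤ) + ∑ t, (c t : ℤ) * ((N.post t ph : ℤ) - (N.pre t ph : ℤ)) := by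
      by_contra hno
      push_neg at hno
      choose β hβ using hno
      apply hub
      refine ⟨Finset.univ.sup fun p => (β p).toNat, fun m' hr hnn p => ?_⟩
      obtain ⟨c, hcm⟩ := zreach_exists_count N hr
      have h1 : m' p ≤ β p := by
        have := hβ p c (fun q => by rw [← hcm q]; exact hnn q)
        rw [hcm p]; exact this
      have h2 : β p ≤ ((Finset.univ.sup fun p => (β p).toNat : ℕ) : ℤ) := by
        have h3 : (β p).toNat ≤ Finset.univ.sup fun p => (β p).toNat :=
          Finset.le_sup (f := fun p => (β p).toNat) (Finset.mem_univ p)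
        omega
      exact h1.trans h2
    obtain ⟨ph, hph⟩ := hphat
    choose F hF1 hF2 using hph
    -- recursively build a sequence of counts with strictly increasing value at ph
    set val : (T → ℕ) → P → ℤ :=
      fun c p => (m p : ℤ) + ∑ t, (c t : ℤ) * ((N.post t p : ℤ) - (N.pre t p : ℤ)) with hval_def
    obtain ⟨f, hfnn, hfsucc⟩ : ∃ f : ℕ → (T → ℕ),
        (∀ k q, 0 ≤ val (f k) q) ∧ ∀ k, val (f k) ph < val (f (k + 1)) ph := by
      refine ⟨fun k => Nat.rec (F 0) (fun _ prev => F (val prev ph)) k, ?_, ?_⟩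
      · intro k
        cases k with
        | zero => exact hF1 0
        | succ n => exact hF1 _
      · intro k
        exact hF2 _
    have hmono : StrictMono fun k => val (f k) ph := strictMono_nat_of_lt_succ hfsucc
    -- Dickson's lemma
    have hpwo : (Set.univ : Set (T ⊕ P → ℕ)).IsPWO :=
      Set.isPWO_of_wellQuasiOrderedLE _
    obtain ⟨i, j, hij, hle⟩ := hpwo.exists_lt
      (f := fun k => Sum.elim (f k) (fun p => (val (f k) p).toNat)) (fun _ => Set.mem_univ _)
    have hcle : ∀ t, f i t ≤ f j t := fun t => hle (Sum.inl t)
    have hvle : ∀ p, val (f i) p ≤ val (f j) p := by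
      intro p
      have := hle (Sum.inr p)
      simp only [Sum.elim_inr] at this
      have h1 := hfnn i p
      have h2 := hfnn j p
      omega
    have hxnn : ∀ t, (0:ℚ) ≤ (f j t : ℚ) - (f i t : ℚ) := by
      intro t
      have h := hcle t
      have h' : (f i t : ℚ) ≤ (f j t : ℚ) := by exact_mod_cast h
      linarith
    refine ⟨fun t => (f j t : ℚ) - (f i t : ℚ), hxnn, ?_, ?_⟩
    · intro p
      have key : ∑ t, ((f j t : ℚ) - (f i t : ℚ)) * ((N.post t p : ℚ) - (N.pre t p : ℚ)) =
          ((val (f j) p - val (f i) p : ℤ) : ℚ) := by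
        simp only [hval_def]
        push_cast
        simp only [sub_mul]
        rw [Finset.sum_sub_distrib]
        ring
      rw [key]
      have := hvle p
      exact_mod_cast sub_nonneg.mpr this
    · refine ⟨ph, ?_⟩
      have key : ∑ t, ((f j t : ℚ) - (f i t : ℚ)) * ((N.post t ph : ℚ) - (N.pre t ph : ℚ)) =
          ((val (f j) ph - val (f i) ph : ℤ) : ℚ) := by
        simp only [hval_def]
        push_cast
        simp only [sub_mul]
        rw [Finset.sum_sub_distrib]
        ring
      rw [key]
      have := hmono hij
      exact_mod_cast sub_pos.mpr this
  · -- solution → unbounded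
    rintro ⟨x, hx0, hxge, p₀, hxpos⟩
    -- scale to naturals
    set d : ℕ := ∏ t, (x t).den with hd_def
    have hd_pos : 0 < d := Finset.prod_pos fun t _ => (x t).pos
    have hnat : ∀ t, ∃ k : ℕ, (k : ℚ) = (d : ℚ) * x t := by
      intro t
      obtain ⟨e, he⟩ : (x t).den ∣ d := Finset.dvd_prod_of_mem _ (Finset.mem_univ t)
      have hd0 : ((x t).den : ℚ) ≠ 0 := by exact_mod_cast (x t).den_nz
      have hden : ((x t).den : ℚ) * x t = ((x t).num : ℚ) := by
        rw [mul_comm]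
        nth_rewrite 1 [← Rat.num_div_den (x t)]
        rw [div_mul_cancel₀ _ hd0]
      have hnum : 0 ≤ (x t).num := Rat.num_nonneg.mpr (hx0 t)
      refine ⟨e * (x t).num.toNat, ?_⟩
      have htn : ((x t).num.toNat : ℚ) = ((x t).num : ℚ) := by
        exact_mod_cast Int.toNat_of_nonneg hnum
      push_cast
      rw [htn, he]
      push_cast
      rw [mul_comm ((x t).den : ℚ) (e : ℚ), mul_assoc, hden]
    choose nn hnn using hnat
    set S : P → ℤ := fun p => ∑ t, (nn t : ℤ) * ((N.post t p : ℤ) - (N.pre t p : ℤ)) with hS_def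
    have hS_cast : ∀ p, ((S p : ℤ) : ℚ) =
        (d : ℚ) * ∑ t, x t * ((N.post t p : ℚ) - (N.pre t p : ℚ)) := by
      intro p
      simp only [hS_def]
      push_cast
      rw [Finset.mul_sum]
      refine Finset.sum_congr rfl fun t _ => ?_
      rw [← mul_assoc, ← hnn t]
    have hSge : ∀ p, 0 ≤ S p := by
      intro p
      have : (0:ℚ) ≤ ((S p : ℤ) : ℚ) := by
        rw [hS_cast p]
        exact mul_nonneg (by positivity) (hxge p)
      exact_mod_cast this
    have hSpos : 0 < S p₀ := by
      have : (0:ℚ) < ((S p₀ : ℤ) : ℚ) := by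
        rw [hS_cast p₀]
        positivity
      exact_mod_cast this
    rintro ⟨b, hb⟩
    -- fire (b+1) copies of nn
    set c : T → ℕ := fun t => (b + 1) * nn t with hc_def
    have hcsum : ∀ p, ∑ t, (c t : ℤ) * ((N.post t p : ℤ) - (N.pre t p : ℤ))
        = (b + 1 : ℤ) * S p := by
      intro p
      simp only [hc_def, hS_def, Finset.mul_sum]
      push_cast
      exact Finset.sum_congr rfl fun t _ => by ring
    have hr := zreach_count N (fun p => (m p : ℤ)) c
    have hnn' : ∀ p, 0 ≤ (m p : ℤ) + ∑ t, (c t : ℤ) * ((N.post t p : ℤ) - (N.pre t p : ℤ)) := by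
      intro p
      rw [hcsum p]
      have := hSge p
      positivity
    have := hb _ hr hnn' p₀
    rw [hcsum p₀] at this
    have hge : (b + 1 : ℤ) ≤ (b + 1 : ℤ) * S p₀ := le_mul_of_one_le_right (by positivity) hSpos
    omega
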